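/- arXiv:0902.4840 — 2 statements merged into one kernel-verified Lean document; each statement's English description precedes it below -/
import Mathlib

section
/- For every m with 1 ≤ m ≤ n and every element u of the free group F, one has Ψ_{τ_m}(Ψ_{τ_m}(u)) =_R t_m^{-1} u t_m, i.e. π(Ψ_{τ_m}(Ψ_{τ_m}(u))) = π(t_m)^{-1} π(u) π(t_m) in the presented group G. -/
namespace PureHilden

/-- The three symbols `p`, `x`, `y`. -/
inductive Sym : Type
  | p | x | y
  deriving DecidableEq

open Sym

/-- Generators of the free group `F`:  `p_{ij}, x_{ij}, y_{ij}` for `1 ≤ i < j ≤ n`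
and `t_k` for `1 ≤ k ≤ n`. -/
inductive Gen (n : ℕ) : Type
  | pair (s : Sym) (i j : ℕ) (h : 1 ≤ i ∧ i < j ∧ j ≤ n) : Gen n
  | t (k : ℕ) (h : 1 ≤ k ∧ k ≤ n) : Gen n

/-- The free group `F` on the set `S`. -/
abbrev FG (n : ℕ) := FreeGroup (Gen n)

/-- `α_{ij}` (symmetrised: `α_{ji} = α_{ij}`); junk value `1` for invalid indices. -/
def gsym (n : ℕ) (s : Sym) (i j : ℕ) : FG n :=
  if h : 1 ≤ min i j ∧ min i j < max i j ∧ max i j ≤ n then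
    FreeGroup.of (Gen.pair s (min i j) (max i j) h)
  else 1

def P (n i j : ℕ) : FG n := gsym n Sym.p i j
def X (n i j : ℕ) : FG n := gsym n Sym.x i j
def Y (n i j : ℕ) : FG n := gsym n Sym.y i j

def T (n k : ℕ) : FG n :=
  if h : 1 ≤ k ∧ k ≤ n then FreeGroup.of (Gen.t k h) else 1

/-- `1 ≤ k ≤ n`. -/
def Idx (n k : ℕ) : Prop := 1 ≤ k ∧ k ≤ n

/-- `1 ≤ i < j ≤ n`. -/
def Idx2 (n i j : ℕ) : Prop := 1 ≤ i ∧ i < j ∧ j ≤ n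

/-- `(i,j,k)` is a cyclic rotation of a strictly increasing triple. -/
def cyc3 (i j k : ℕ) : Prop := (i < j ∧ j < k) ∨ (j < k ∧ k < i) ∨ (k < i ∧ i < j)

/-- `(i,j,k,l)` is a cyclic rotation of a strictly increasing quadruple. -/
def cyc4 (i j k l : ℕ) : Prop :=
  (i < j ∧ j < k ∧ k < l) ∨ (j < k ∧ k < l ∧ l < i) ∨
  (k < l ∧ l < i ∧ i < j) ∨ (l < i ∧ i < j ∧ j < k)

def c2A : List (Sym × Sym × Sym) :=
  [(p,p,p),(p,y,y),(x,p,p),(x,x,p),(x,y,y),(y,p,p),(y,p,x),(y,y,y)]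
def c2B : List (Sym × Sym × Sym) :=
  [(p,p,p),(p,x,y),(x,p,p),(x,p,x),(x,x,y),(y,p,p),(y,x,y),(y,y,p)]
def c2C : List (Sym × Sym × Sym) :=
  [(p,p,p),(p,x,x),(x,p,p),(x,x,x),(x,y,p),(y,p,p),(y,p,y),(y,x,x)]

/-- The allowed triples `(α,β,γ)` for relation (C2), by cyclic ordering of `(i,j,k)`. -/
def C2ok (i j k : ℕ) (a b c : Sym) : Prop :=
  (i < j ∧ j < k ∧ (a,b,c) ∈ c2A) ∨
  (j < k ∧ k < i ∧ (a,b,c) ∈ c2B) ∨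
  (k < i ∧ i < j ∧ (a,b,c) ∈ c2C)

/-- The relations `R`, encoded as the words `u * v⁻¹` for each relation `u = v`. -/
inductive Rel (n : ℕ) : FG n → Prop
  | cpt {i j k : ℕ} (hij : Idx2 n i j) (hk : Idx n k) :
      Rel n (P n i j * T n k * (T n k * P n i j)⁻¹)
  | ctt {i j : ℕ} (hi : Idx n i) (hj : Idx n j) :
      Rel n (T n i * T n j * (T n j * T n i)⁻¹)
  | cxt {i j k : ℕ} (hij : Idx2 n i j) (hk : Idx n k) (hne : k ≠ i) :
      Rel n (X n i j * T n k * (T n k * X n i j)⁻¹)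
  | cyt {i j k : ℕ} (hij : Idx2 n i j) (hk : Idx n k) (hne : k ≠ j) :
      Rel n (Y n i j * T n k * (T n k * Y n i j)⁻¹)
  | c1 (a b : Sym) {i j k l : ℕ} (hi : Idx n i) (hj : Idx n j) (hk : Idx n k)
      (hl : Idx n l) (hc : cyc4 i j k l) :
      Rel n (gsym n a i j * gsym n b k l * (gsym n b k l * gsym n a i j)⁻¹)
  | c2 (a b c : Sym) {i j k : ℕ} (hi : Idx n i) (hj : Idx n j) (hk : Idx n k)
      (h : C2ok i j k a b c) :
      Rel n (gsym n a i j * (gsym n b i k * gsym n c j k) *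
             (gsym n b i k * gsym n c j k * gsym n a i j)⁻¹)
  | c3 (a b : Sym) {i j k l : ℕ} (hi : Idx n i) (hj : Idx n j) (hk : Idx n k)
      (hl : Idx n l) (hc : cyc4 i j k l) :
      Rel n (gsym n a i k * (P n j k * gsym n b j l * (P n j k)⁻¹) *
             (P n j k * gsym n b j l * (P n j k)⁻¹ * gsym n a i k)⁻¹)
  | mx {i j : ℕ} (hij : Idx2 n i j) :
      Rel n (X n i j * P n i j * T n i * (P n i j * T n i * X n i j)⁻¹)
  | my {i j : ℕ} (hij : Idx2 n i j) :
      Rel n (Y n i j * P n i j * T n j * (P n i j * T n j * Y n i j)⁻¹)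

/-- The presented group `G = ⟨S ∣ R⟩`. -/
abbrev GG (n : ℕ) := FG n ⧸ Subgroup.normalClosure {w : FG n | Rel n w}

/-- The quotient homomorphism `π : F → G`. -/
def piG (n : ℕ) : FG n →* GG n := QuotientGroup.mk' _

/-- The map defining `Φ_{σ_m}` on generators. -/
def phiSigmaMap (n m : ℕ) : Gen n → FG n
  | Gen.pair s i j _ =>
      if i = m ∧ j = m + 1 then
        match s with
        | Sym.p => P n m (m+1)
        | Sym.x => (T n (m+1))⁻¹ * Y n m (m+1) * T n (m+1)
        | Sym.y => X n m (m+1)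
      else if i = m then gsym n s (m+1) j
      else if j = m then gsym n s (m+1) i
      else if i = m + 1 then P n m (m+1) * gsym n s m j * (P n m (m+1))⁻¹
      else if j = m + 1 then P n m (m+1) * gsym n s m i * (P n m (m+1))⁻¹
      else gsym n s i j
  | Gen.t k _ =>
      if k = m then T n (m+1) else if k = m + 1 then T n m else T n k

/-- `Φ_{σ_m} : F → F`. -/
def phiSigma (n m : ℕ) : FG n →* FG n := FreeGroup.lift (phiSigmaMap n m)

/-- The map defining `Ψ_{σ_m}` on generators. -/
def psiSigmaMap (n m : ℕ) : Gen n → FG n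
  | Gen.pair s i j _ =>
      if i = m ∧ j = m + 1 then
        match s with
        | Sym.p => P n m (m+1)
        | Sym.x => Y n m (m+1)
        | Sym.y => T n m * X n m (m+1) * (T n m)⁻¹
      else if i = m then (P n m (m+1))⁻¹ * gsym n s (m+1) j * P n m (m+1)
      else if j = m then (P n m (m+1))⁻¹ * gsym n s (m+1) i * P n m (m+1)
      else if i = m + 1 then gsym n s m j
      else if j = m + 1 then gsym n s m i
      else gsym n s i j
  | Gen.t k _ =>
      if k = m then T n (m+1) else if k = m + 1 then T n m else T n k

/-- `Ψ_{σ_m} : F → F`. -/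
def psiSigma (n m : ℕ) : FG n →* FG n := FreeGroup.lift (psiSigmaMap n m)

/-- The map defining `Φ_{τ_m}` on generators. -/
def phiTauMap (n m : ℕ) : Gen n → FG n
  | Gen.pair s i j _ =>
      match s with
      | Sym.p => P n i j
      | Sym.x => if m = i then (X n i j)⁻¹ * P n i j else X n i j
      | Sym.y => if m = j then (Y n i j)⁻¹ * P n i j else Y n i j
  | Gen.t k _ => T n k

/-- `Φ_{τ_m} : F → F`. -/
def phiTau (n m : ℕ) : FG n →* FG n := FreeGroup.lift (phiTauMap n m)

/-- The map defining `Ψ_{τ_m}` on generators. -/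
def psiTauMap (n m : ℕ) : Gen n → FG n
  | Gen.pair s i j _ =>
      match s with
      | Sym.p => P n i j
      | Sym.x => if m = i then P n i j * (X n i j)⁻¹ else X n i j
      | Sym.y => if m = j then P n i j * (Y n i j)⁻¹ else Y n i j
  | Gen.t k _ => T n k

/-- `Ψ_{τ_m} : F → F`. -/
def psiTau (n m : ℕ) : FG n →* FG n := FreeGroup.lift (psiTauMap n m)

lemma gsym_eq {n : ℕ} (s : Sym) {i j : ℕ} (h : Idx2 n i j) :
    gsym n s i j = FreeGroup.of (Gen.pair s i j h) := by
  have h1 : min i j = i := min_eq_left (le_of_lt h.2.1)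
  have h2 : max i j = j := max_eq_right (le_of_lt h.2.1)
  rw [gsym]
  simp only [h1, h2]
  exact dif_pos h

lemma T_eq {n k : ℕ} (h : Idx n k) : T n k = FreeGroup.of (Gen.t k h) := by
  rw [T]; exact dif_pos h

lemma rel_eq {n : ℕ} {u v : FG n} (h : Rel n (u * v⁻¹)) : piG n u = piG n v := by
  have h1 : piG n (u * v⁻¹) = 1 := by
    apply (QuotientGroup.eq_one_iff _).mpr
    exact Subgroup.subset_normalClosure h
  rw [map_mul, map_inv] at h1
  exact mul_inv_eq_one.mp h1

lemma conj_helper {G : Type*} [Group G] (a b c : G)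
    (h1 : a * b * c = b * c * a) (h2 : b * c = c * b) :
    b * a * b⁻¹ = c⁻¹ * a * c := by
  have key : c * b * a = a * (c * b) := by
    calc c * b * a = b * c * a := by rw [← h2]
    _ = a * b * c := h1.symm
    _ = a * (b * c) := by rw [mul_assoc]
    _ = a * (c * b) := by rw [h2]
  have h3 := congrArg (fun g => c⁻¹ * g * b⁻¹) key
  simp only [mul_assoc] at h3
  simpa [mul_assoc] using h3

/-- For `1 ≤ m ≤ n` and all `u ∈ F`,
`Ψ_{τ_m}(Ψ_{τ_m}(u)) =_R t_m⁻¹ u t_m`. -/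
theorem psiTau_sq (n : ℕ) (hn : 2 ≤ n) (m : ℕ) (hm : 1 ≤ m ∧ m ≤ n)
    (u : FG n) :
    piG n (psiTau n m (psiTau n m u)) =
      (piG n (T n m))⁻¹ * piG n u * piG n (T n m) := by
  have hmI : Idx n m := hm
  have key : ∀ g : Gen n,
      piG n (psiTau n m (psiTau n m (FreeGroup.of g))) =
        (piG n (T n m))⁻¹ * piG n (FreeGroup.of g) * piG n (T n m) := by
    intro g
    cases g with
    | t k hk =>
      have hTof : T n k = FreeGroup.of (Gen.t k hk) := T_eq hk
      rw [← hTof]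
      have hT : psiTau n m (T n k) = T n k := by
        conv_lhs => rw [hTof]
        rw [psiTau, FreeGroup.lift_apply_of]
        rfl
      rw [hT, hT]
      have hc := rel_eq (Rel.ctt hk hmI)
      rw [map_mul, map_mul] at hc
      rw [mul_assoc, hc, ← mul_assoc, inv_mul_cancel, one_mul]
    | pair s i j hij =>
      have hi : Idx n i := ⟨hij.1, le_trans (le_of_lt hij.2.1) hij.2.2⟩
      have hj : Idx n j := ⟨le_trans hij.1 (le_of_lt hij.2.1), hij.2.2⟩
      have hPof : P n i j = FreeGroup.of (Gen.pair Sym.p i j hij) := by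
        rw [P, gsym_eq Sym.p hij]
      have hP : psiTau n m (P n i j) = P n i j := by
        conv_lhs => rw [hPof]
        rw [psiTau, FreeGroup.lift_apply_of]
        rfl
      cases s with
      | p =>
        rw [← hPof, hP, hP]
        have hc := rel_eq (Rel.cpt hij hmI)
        rw [map_mul, map_mul] at hc
        rw [mul_assoc, hc, ← mul_assoc, inv_mul_cancel, one_mul]
      | x =>
        have hXof : X n i j = FreeGroup.of (Gen.pair Sym.x i j hij) := by
          rw [X, gsym_eq Sym.x hij]
        have hX : psiTau n m (X n i j) =
            if m = i then P n i j * (X n i j)⁻¹ else X n i j := by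
          conv_lhs => rw [hXof]
          rw [psiTau, FreeGroup.lift_apply_of]
          rfl
        rw [← hXof]
        by_cases hmi : m = i
        · have hmx := rel_eq (Rel.mx hij)
          rw [map_mul, map_mul, map_mul, map_mul] at hmx
          have hpt := rel_eq (Rel.cpt hij hi)
          rw [map_mul, map_mul] at hpt
          have hconj := conj_helper (piG n (X n i j)) (piG n (P n i j))
            (piG n (T n i)) hmx hpt
          rw [hX, if_pos hmi]
          simp only [map_mul, map_inv]
          rw [hP, hX, if_pos hmi]
          simp only [map_mul, map_inv]
          rw [hmi, ← hconj]
          group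
        · rw [hX, if_neg hmi, hX, if_neg hmi]
          have hc := rel_eq (Rel.cxt hij hmI hmi)
          rw [map_mul, map_mul] at hc
          rw [mul_assoc, hc, ← mul_assoc, inv_mul_cancel, one_mul]
      | y =>
        have hYof : Y n i j = FreeGroup.of (Gen.pair Sym.y i j hij) := by
          rw [Y, gsym_eq Sym.y hij]
        have hY : psiTau n m (Y n i j) =
            if m = j then P n i j * (Y n i j)⁻¹ else Y n i j := by
          conv_lhs => rw [hYof]
          rw [psiTau, FreeGroup.lift_apply_of]
          rfl
        rw [← hYof]
        by_cases hmj : m = j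
        · have hmy := rel_eq (Rel.my hij)
          rw [map_mul, map_mul, map_mul, map_mul] at hmy
          have hpt := rel_eq (Rel.cpt hij hj)
          rw [map_mul, map_mul] at hpt
          have hconj := conj_helper (piG n (Y n i j)) (piG n (P n i j))
            (piG n (T n j)) hmy hpt
          rw [hY, if_pos hmj]
          simp only [map_mul, map_inv]
          rw [hP, hY, if_pos hmj]
          simp only [map_mul, map_inv]
          rw [hmj, ← hconj]
          group
        · rw [hY, if_neg hmj, hY, if_neg hmj]
          have hc := rel_eq (Rel.cyt hij hmI hmj)
          rw [map_mul, map_mul] at hc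
          rw [mul_assoc, hc, ← mul_assoc, inv_mul_cancel, one_mul]
  induction u using FreeGroup.induction_on with
  | C1 => simp
  | of g => exact key g
  | inv_of g ih => simp only [map_inv, ih]; group
  | mul u v ihu ihv => simp only [map_mul, ihu, ihv]; group

end PureHilden
end

section
/- For all indices 1 ≤ i < j < k ≤ n, in the presented group G the element t_j^{-1} y_{ij} t_j commutes with x_{jk} p_{ij} p_{ik} p_{ij}^{-1}: (t_j^{-1} y_{ij} t_j)(x_{jk} p_{ij} p_{ik} p_{ij}^{-1}) =_R (x_{jk} p_{ij} p_{ik} p_{ij}^{-1})(t_j^{-1} y_{ij} t_j). -/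
namespace PureHilden

open Sym

lemma gsym_swap (n : ℕ) (s : Sym) (i j : ℕ) : gsym n s i j = gsym n s j i := by
  simp [gsym, min_comm, max_comm]

lemma grp_calc {G : Type*} [Group G] (y x pij pik tj : G)
    (h1 : y * (pik * x) = pik * x * y)
    (h2 : x * (pij * pik) = pij * pik * x)
    (h3 : y * pij * tj = pij * tj * y)
    (h4 : pij * tj = tj * pij) :
    tj⁻¹ * y * tj * (x * pij * pik * pij⁻¹) =
      x * pij * pik * pij⁻¹ * (tj⁻¹ * y * tj) := by
  have key : tj⁻¹ * y * tj * pij = pij * y := by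
    calc tj⁻¹ * y * tj * pij = tj⁻¹ * (y * (tj * pij)) := by group
      _ = tj⁻¹ * (y * (pij * tj)) := by rw [← h4]
      _ = tj⁻¹ * (y * pij * tj) := by group
      _ = tj⁻¹ * (pij * tj * y) := by rw [h3]
      _ = tj⁻¹ * (tj * pij * y) := by rw [h4]
      _ = pij * y := by group
  have key2 : pij⁻¹ * (tj⁻¹ * y * tj) = y * pij⁻¹ := by
    calc pij⁻¹ * (tj⁻¹ * y * tj) = pij⁻¹ * (tj⁻¹ * y * tj * pij) * pij⁻¹ := by group
      _ = pij⁻¹ * (pij * y) * pij⁻¹ := by rw [key]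
      _ = y * pij⁻¹ := by group
  calc tj⁻¹ * y * tj * (x * pij * pik * pij⁻¹)
      = tj⁻¹ * y * tj * (x * (pij * pik)) * pij⁻¹ := by group
    _ = tj⁻¹ * y * tj * (pij * pik * x) * pij⁻¹ := by rw [h2]
    _ = (tj⁻¹ * y * tj * pij) * (pik * x) * pij⁻¹ := by group
    _ = pij * y * (pik * x) * pij⁻¹ := by rw [key]
    _ = pij * (y * (pik * x)) * pij⁻¹ := by group
    _ = pij * (pik * x * y) * pij⁻¹ := by rw [h1]
    _ = pij * pik * x * (pij⁻¹ * (tj⁻¹ * y * tj)) := by rw [key2]; group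
    _ = (pij * pik * x) * pij⁻¹ * (tj⁻¹ * y * tj) := by group
    _ = (x * (pij * pik)) * pij⁻¹ * (tj⁻¹ * y * tj) := by rw [h2]
    _ = x * pij * pik * pij⁻¹ * (tj⁻¹ * y * tj) := by group

/-- STATEMENT 17: For `1 ≤ i < j < k ≤ n`, in `G` the element `t_j⁻¹ y_ij t_j`
commutes with `x_jk p_ij p_ik p_ij⁻¹`. -/
theorem stmt17 (n : ℕ) (hn : 2 ≤ n) (i j k : ℕ)
    (h : 1 ≤ i ∧ i < j ∧ j < k ∧ k ≤ n) :
    piG n ((T n j)⁻¹ * Y n i j * T n j * (X n j k * P n i j * P n i k * (P n i j)⁻¹)) =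
    piG n (X n j k * P n i j * P n i k * (P n i j)⁻¹ * ((T n j)⁻¹ * Y n i j * T n j)) := by
  obtain ⟨h1i, hij, hjk, hkn⟩ := h
  have hjn : j ≤ n := le_of_lt (lt_of_lt_of_le hjk hkn)
  have hIij : Idx2 n i j := ⟨h1i, hij, hjn⟩
  have hIi : Idx n i := ⟨h1i, le_of_lt (lt_of_lt_of_le hij hjn)⟩
  have hIj : Idx n j := ⟨le_trans h1i (le_of_lt hij), hjn⟩
  have hIk : Idx n k := ⟨le_trans hIj.1 (le_of_lt hjk), hkn⟩
  -- (C2) with roles (i,j,k), triple (y,p,x): y_ij commutes with p_ik x_jk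
  have E1 : piG n (Y n i j * (P n i k * X n j k)) =
      piG n (P n i k * X n j k * Y n i j) :=
    rel_eq (Rel.c2 Sym.y Sym.p Sym.x hIi hIj hIk
      (Or.inl ⟨hij, hjk, by decide⟩))
  -- (C2) with roles (j,k,i), triple (x,p,p): x_jk commutes with p_ij p_ik
  have E2 : piG n (X n j k * (P n i j * P n i k)) =
      piG n (P n i j * P n i k * X n j k) := by
    have := rel_eq (Rel.c2 Sym.x Sym.p Sym.p hIj hIk hIi
      (Or.inr (Or.inr ⟨hij, hjk, by decide⟩)))
    simpa [P, X, gsym_swap n Sym.p j i, gsym_swap n Sym.p k i] using this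
  -- (M-y)
  have E3 : piG n (Y n i j * P n i j * T n j) = piG n (P n i j * T n j * Y n i j) :=
    rel_eq (Rel.my hIij)
  -- (C-pt)
  have E4 : piG n (P n i j * T n j) = piG n (T n j * P n i j) :=
    rel_eq (Rel.cpt hIij hIj)
  simp only [map_mul, map_inv] at E1 E2 E3 E4 ⊢
  exact grp_calc _ _ _ _ _ E1 E2 E3 E4

end PureHilden
end
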